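/- Let n ≥ 3. In the vector space Q_n = ℝ^{C(n,2)}/Im(φ_n), where φ_n : ℝ^n → ℝ^{C(n,2)} maps x to (x_i + x_j)_{i<j}, for each k ∈ [n] define v_I for a 2-element set I ⊆ [n] as the image of the indicator-distance vector of the tree with one bounded edge separating I from its complement. Then for every fixed k, the family V_k = {v_I : k ∉ I, |I| = 2} satisfies ∑_{w ∈ V_k} w = 0 in Q_n, and removing any single element v_{I_0} from V_k yields a basis of Q_n. -/

import Mathlib

/-!
STATEMENT 4: Let n ≥ 3.  In the vector space Q_n = ℝ^{C(n,2)}/Im(φ_n), where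
φ_n : ℝ^n → ℝ^{C(n,2)} maps x to (x_i + x_j)_{i<j}, for each k ∈ [n] define v_I for a
2-element set I ⊆ [n] as the image of the indicator-distance vector of the tree with one
bounded edge separating I from its complement.  Then for every fixed k, the family
V_k = {v_I : k ∉ I, |I| = 2} satisfies ∑_{w ∈ V_k} w = 0 in Q_n, and removing any single
element v_{I_0} from V_k yields a basis of Q_n.
-/

namespace Stmt4

open scoped Classical

/-- Index type for the coordinates of `ℝ^{C(n,2)}`: ordered pairs i < j in [n]. -/
def Pair (n : ℕ) := {p : Fin n × Fin n // p.1 < p.2}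

/-- The map φ_n : ℝ^n → ℝ^{C(n,2)}, x ↦ (x_i + x_j)_{i<j}. -/
def phiMap (n : ℕ) (x : Fin n → ℝ) : Pair n → ℝ := fun p => x p.val.1 + x p.val.2

/-- The subspace Im(φ_n) of ℝ^{C(n,2)}. -/
noncomputable def phiIm (n : ℕ) : Submodule ℝ (Pair n → ℝ) :=
  Submodule.span ℝ (Set.range (phiMap n))

/-- The indicator-distance vector of the tree with one bounded edge (of length 1)
separating I from its complement: entry 1 at {i,j} if exactly one of i, j lies in I,
and 0 otherwise. -/
noncomputable def splitVec {n : ℕ} (I : Finset (Fin n)) : Pair n → ℝ := fun p =>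
  if ((p.val.1 ∈ I) ↔ (p.val.2 ∈ I)) then 0 else 1

/-- The class v_I of the split vector of I in Q_n = ℝ^{C(n,2)}/Im(φ_n). -/
noncomputable def v {n : ℕ} (I : Finset (Fin n)) : (Pair n → ℝ) ⧸ phiIm n :=
  Submodule.Quotient.mk (splitVec I)

variable {n : ℕ}

instance : Fintype (Pair n) := by unfold Pair; infer_instance

def pairOf (p : Pair n) : Finset (Fin n) := {p.val.1, p.val.2}

lemma pairOf_injective : Function.Injective (pairOf (n := n)) := by
  rintro ⟨⟨a,b⟩,hab⟩ ⟨⟨c,d⟩,hcd⟩ h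
  simp only [pairOf] at h
  have h1 : a = c ∨ a = d := by
    have : a ∈ ({c,d} : Finset (Fin n)) := by rw [← h]; simp
    simpa using this
  have h2 : b = c ∨ b = d := by
    have : b ∈ ({c,d} : Finset (Fin n)) := by rw [← h]; simp
    simpa using this
  have h3 : c = a ∨ c = b := by
    have : c ∈ ({a,b} : Finset (Fin n)) := by rw [h]; simp
    simpa using this
  have hab' : (a:ℕ) < b := hab
  have hcd' : (c:ℕ) < d := hcd
  simp only [Fin.ext_iff] at h1 h2 h3
  have : (a:ℕ) = c ∧ (b:ℕ) = d := by omega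
  exact Subtype.ext (Prod.ext (Fin.ext this.1) (Fin.ext this.2))

lemma card_pairOf (p : Pair n) : (pairOf p).card = 2 := by
  obtain ⟨⟨a,b⟩,hab⟩ := p
  have : a ≠ b := ne_of_lt hab
  simp [pairOf, Finset.card_insert_of_notMem, this]

lemma splitVec_pairOf (p : Pair n) :
    splitVec (pairOf p) = phiMap n (Pi.single p.val.1 1 + Pi.single p.val.2 1)
      - (2:ℝ) • (Pi.single p 1 : Pair n → ℝ) := by
  funext q
  rw [Pi.sub_apply, Pi.smul_apply, Pi.single_apply,
    if_congr (show q = p ↔ q.val = p.val from Subtype.ext_iff) rfl rfl]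
  obtain ⟨⟨a,b⟩,hab⟩ := p; obtain ⟨⟨c,d⟩,hcd⟩ := q
  simp only [splitVec, phiMap, pairOf, Pi.add_apply, Pi.sub_apply, Pi.smul_apply, smul_eq_mul,
    Finset.mem_insert, Finset.mem_singleton, Pi.single_apply, Subtype.mk.injEq, Prod.mk.injEq]
  have hiff : ((⟨(c,d),hcd⟩ : Pair n) = ⟨(a,b),hab⟩) ↔ (c = a ∧ d = b) := by
    constructor
    · intro h; cases h; exact ⟨rfl, rfl⟩
    · rintro ⟨rfl, rfl⟩; rfl
  have hab' : (a:ℕ) < b := hab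
  have hcd' : (c:ℕ) < d := hcd
  clear hiff
  simp only [Fin.ext_iff]
  split_ifs
  all_goals (try (exfalso; omega))
  all_goals norm_num
noncomputable def phiLin (n : ℕ) : (Fin n → ℝ) →ₗ[ℝ] (Pair n → ℝ) where
  toFun := phiMap n
  map_add' x y := by funext p; simp [phiMap]; ring
  map_smul' c x := by funext p; simp [phiMap]; ring

lemma phi_mem (x : Fin n → ℝ) : phiMap n x ∈ phiIm n := Submodule.subset_span ⟨x, rfl⟩

noncomputable def Pk (n : ℕ) (k : Fin n) : Finset (Pair n) :=
  Finset.univ.filter (fun p : Pair n => p.val.1 ≠ k ∧ p.val.2 ≠ k)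

lemma mem_Pk {k : Fin n} {p : Pair n} : p ∈ Pk n k ↔ p.val.1 ≠ k ∧ p.val.2 ≠ k := by
  simp [Pk]

lemma mem_pairOf {x : Fin n} {p : Pair n} : x ∈ pairOf p ↔ x = p.val.1 ∨ x = p.val.2 := by
  simp [pairOf]

lemma k_not_mem_pairOf {k : Fin n} {p : Pair n} (h : p ∈ Pk n k) : k ∉ pairOf p := by
  rw [mem_Pk] at h
  rw [mem_pairOf]
  rintro (rfl | rfl)
  · exact h.1 rfl
  · exact h.2 rfl

lemma F_eq (k : Fin n) :
    (Finset.powersetCard 2 (Finset.univ : Finset (Fin n))).filter (fun I => k ∉ I)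
      = (Pk n k).image pairOf := by
  ext I
  simp only [Finset.mem_filter, Finset.mem_powersetCard, Finset.mem_image]
  constructor
  · rintro ⟨⟨-, hcard⟩, hk⟩
    obtain ⟨a, b, hne, rfl⟩ := Finset.card_eq_two.mp hcard
    have ha : a ≠ k := fun e => hk (by rw [← e]; simp)
    have hb : b ≠ k := fun e => hk (by rw [← e]; simp)
    rcases lt_or_gt_of_ne hne with hlt | hgt
    · exact ⟨⟨(a,b), hlt⟩, mem_Pk.mpr ⟨ha, hb⟩, rfl⟩
    · exact ⟨⟨(b,a), hgt⟩, mem_Pk.mpr ⟨hb, ha⟩, by simp [pairOf, Finset.pair_comm]⟩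
  · rintro ⟨p, hp, rfl⟩
    exact ⟨⟨Finset.subset_univ _, card_pairOf p⟩, k_not_mem_pairOf hp⟩

lemma sum_single_Pk (k : Fin n) :
    ∑ p ∈ Pk n k, (Pi.single p 1 : Pair n → ℝ)
      = phiMap n (fun i => if i = k then -(1/2) else (1/2)) := by
  funext q
  rw [Finset.sum_apply]
  have : ∀ p ∈ Pk n k, (Pi.single p 1 : Pair n → ℝ) q = if q = p then 1 else 0 := by
    intro p _; rw [Pi.single_apply]
  rw [Finset.sum_congr rfl this, Finset.sum_ite_eq (Pk n k) q (fun _ => (1:ℝ))]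
  have hne : q.val.1 ≠ q.val.2 := ne_of_lt q.prop
  by_cases h1 : q.val.1 = k <;> by_cases h2 : q.val.2 = k <;>
    simp [phiMap, mem_Pk, h1, h2] <;> first | (exact absurd (h1.trans h2.symm) hne) | norm_num
lemma phi_single (i : Fin n) :
    phiMap n (Pi.single i 1)
      = ∑ p ∈ Finset.univ.filter (fun p : Pair n => p.val.1 = i ∨ p.val.2 = i),
          (Pi.single p 1 : Pair n → ℝ) := by
  funext q
  rw [Finset.sum_apply]
  have : ∀ p ∈ Finset.univ.filter (fun p : Pair n => p.val.1 = i ∨ p.val.2 = i),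
      (Pi.single p 1 : Pair n → ℝ) q = if q = p then 1 else 0 := by
    intro p _; rw [Pi.single_apply]
  rw [Finset.sum_congr rfl this, Finset.sum_ite_eq _ q (fun _ => (1:ℝ))]
  have hne : q.val.1 ≠ q.val.2 := ne_of_lt q.prop
  by_cases h1 : q.val.1 = i <;> by_cases h2 : q.val.2 = i <;>
    simp [phiMap, Pi.single_apply, h1, h2] <;>
      first | (exact absurd (h1.trans h2.symm) hne) | norm_num

lemma phiIm_eq : phiIm n = LinearMap.range (phiLin n) := by
  rw [phiIm]
  have h : Set.range (phiMap n) = (LinearMap.range (phiLin n) : Set (Pair n → ℝ)) := by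
    ext y; constructor
    · rintro ⟨x, rfl⟩; exact ⟨x, rfl⟩
    · rintro ⟨x, rfl⟩; exact ⟨x, rfl⟩
  rw [h, Submodule.span_eq]

lemma phiLin_inj (hn : 3 ≤ n) : Function.Injective (phiLin n) := by
  rw [injective_iff_map_eq_zero]
  intro x hx
  have key : ∀ a b : Fin n, a ≠ b → x a + x b = 0 := by
    intro a b hab
    rcases lt_or_gt_of_ne hab with h | h
    · have := congrFun hx ⟨(a,b), h⟩
      exact this
    · have := congrFun hx ⟨(b,a), h⟩
      have h2 : x b + x a = 0 := this
      linarith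
  funext i
  have h0 : (0:ℕ) < n := by omega
  have h1 : (1:ℕ) < n := by omega
  have h2 : (2:ℕ) < n := by omega
  set i0 : Fin n := ⟨0, h0⟩
  set i1 : Fin n := ⟨1, h1⟩
  set i2 : Fin n := ⟨2, h2⟩
  have d01 : i0 ≠ i1 := by simp [i0, i1, Fin.ext_iff]
  have d02 : i0 ≠ i2 := by simp [i0, i2, Fin.ext_iff]
  have d12 : i1 ≠ i2 := by simp [i1, i2, Fin.ext_iff]
  -- pick two indices j l distinct from i and from each other
  obtain ⟨j, l, hjl, hij, hil⟩ : ∃ j l : Fin n, j ≠ l ∧ i ≠ j ∧ i ≠ l := by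
    by_cases e0 : i = i0
    · exact ⟨i1, i2, d12, by rw [e0]; exact d01, by rw [e0]; exact d02⟩
    · by_cases e1 : i = i1
      · exact ⟨i0, i2, d02, by rw [e1]; exact fun h => d01 h.symm, by rw [e1]; exact d12⟩
      · exact ⟨i0, i1, d01, e0, e1⟩
  have k1 := key i j hij
  have k2 := key i l hil
  have k3 := key j l hjl
  have : (2:ℝ) * x i = 0 := by linarith
  simpa using this
lemma card_Pair : Fintype.card (Pair n) = n.choose 2 := by
  have himg : (Finset.univ : Finset (Pair n)).image pairOf
      = Finset.powersetCard 2 (Finset.univ : Finset (Fin n)) := by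
    ext I
    simp only [Finset.mem_image, Finset.mem_powersetCard]
    constructor
    · rintro ⟨p, -, rfl⟩; exact ⟨Finset.subset_univ _, card_pairOf p⟩
    · rintro ⟨-, hcard⟩
      obtain ⟨a, b, hne, rfl⟩ := Finset.card_eq_two.mp hcard
      rcases lt_or_gt_of_ne hne with hlt | hgt
      · exact ⟨⟨(a,b), hlt⟩, Finset.mem_univ _, rfl⟩
      · exact ⟨⟨(b,a), hgt⟩, Finset.mem_univ _, by simp [pairOf, Finset.pair_comm]⟩
  have h2 := Finset.card_image_of_injective (Finset.univ : Finset (Pair n)) pairOf_injective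
  rw [himg] at h2
  calc Fintype.card (Pair n) = (Finset.univ : Finset (Pair n)).card := (Finset.card_univ).symm
  _ = (Finset.powersetCard 2 (Finset.univ : Finset (Fin n))).card := h2.symm
  _ = n.choose 2 := by rw [Finset.card_powersetCard, Finset.card_univ, Fintype.card_fin]

lemma finrank_quot (hn : 3 ≤ n) :
    Module.finrank ℝ ((Pair n → ℝ) ⧸ phiIm n) + n = n.choose 2 := by
  have h1 : Module.finrank ℝ (phiIm n) = n := by
    rw [phiIm_eq, LinearMap.finrank_range_of_inj (phiLin_inj hn)]
    simp [Module.finrank_fintype_fun_eq_card]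
  have h2 := Submodule.finrank_quotient_add_finrank (phiIm n)
  rw [h1] at h2
  calc Module.finrank ℝ ((Pair n → ℝ) ⧸ phiIm n) + n
      = Module.finrank ℝ (Pair n → ℝ) := h2
  _ = n.choose 2 := by rw [Module.finrank_fintype_fun_eq_card, card_Pair]

lemma card_index (hn : 3 ≤ n) (k : Fin n) (I₀ : Finset (Fin n))
    (hI₀ : I₀ ∈ (Finset.powersetCard 2 (Finset.univ : Finset (Fin n))).filter (fun I => k ∉ I)) :
    Fintype.card {I : Finset (Fin n) //
        I ∈ (Finset.powersetCard 2 (Finset.univ : Finset (Fin n))).filter (fun I => k ∉ I) ∧ I ≠ I₀}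
      = n.choose 2 - n := by
  set F := (Finset.powersetCard 2 (Finset.univ : Finset (Fin n))).filter (fun I => k ∉ I) with hF
  have hFcard : F.card = (n-1).choose 2 := by
    have hFe : F = Finset.powersetCard 2 (Finset.univ.erase k) := by
      ext I
      simp only [hF, Finset.mem_filter, Finset.mem_powersetCard, Finset.subset_erase]
      tauto
    rw [hFe, Finset.card_powersetCard, Finset.card_erase_of_mem (Finset.mem_univ k),
      Finset.card_univ, Fintype.card_fin]
  have hcard : Fintype.card {I // I ∈ F ∧ I ≠ I₀} = F.card - 1 := by
    rw [Fintype.card_subtype]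
    have he : Finset.univ.filter (fun I => I ∈ F ∧ I ≠ I₀) = F.erase I₀ := by
      ext I; simp [Finset.mem_erase, and_comm]
    rw [he, Finset.card_erase_of_mem hI₀]
  rw [hcard, hFcard]
  obtain ⟨m, rfl⟩ : ∃ m, n = m + 3 := ⟨n - 3, by omega⟩
  have hm : m + 3 - 1 = m + 2 := rfl
  rw [hm]
  have e1 : (m+3).choose 2 = (m+2).choose 1 + (m+2).choose 2 := Nat.choose_succ_succ _ _
  have e2 : (m+2).choose 2 = (m+1).choose 1 + (m+1).choose 2 := Nat.choose_succ_succ _ _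
  simp only [Nat.choose_one_right] at e1 e2
  omega
theorem sum_Vk_eq_zero_and_basis (n : ℕ) (hn : 3 ≤ n) (k : Fin n) :
    (∑ I ∈ (Finset.powersetCard 2 Finset.univ).filter (fun I => k ∉ I), v I) = 0 ∧
    ∀ I₀ ∈ (Finset.powersetCard 2 Finset.univ).filter (fun I => k ∉ I),
      LinearIndependent ℝ
        (fun I : {I : Finset (Fin n) //
            I ∈ (Finset.powersetCard 2 Finset.univ).filter (fun I => k ∉ I) ∧ I ≠ I₀} =>
          v I.val) ∧
      Submodule.span ℝ
        (Set.range (fun I : {I : Finset (Fin n) //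
            I ∈ (Finset.powersetCard 2 Finset.univ).filter (fun I => k ∉ I) ∧ I ≠ I₀} =>
          v I.val)) = ⊤ := by
  have hinj2 : ∀ p ∈ Pk n k, ∀ q ∈ Pk n k, pairOf p = pairOf q → p = q :=
    fun p _ q _ h => pairOf_injective h
  constructor
  · -- the sum is zero
    rw [F_eq k, Finset.sum_image hinj2]
    have hv : ∀ p ∈ Pk n k, v (pairOf p) = (phiIm n).mkQ (splitVec (pairOf p)) :=
      fun p _ => (Submodule.mkQ_apply _ _).symm
    rw [Finset.sum_congr rfl hv, ← map_sum]
    rw [Submodule.mkQ_apply, Submodule.Quotient.mk_eq_zero]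
    have hsplit : (∑ p ∈ Pk n k, splitVec (pairOf p))
        = (∑ p ∈ Pk n k, phiMap n (Pi.single p.val.1 1 + Pi.single p.val.2 1))
          - (2:ℝ) • (∑ p ∈ Pk n k, (Pi.single p 1 : Pair n → ℝ)) := by
      rw [Finset.smul_sum, ← Finset.sum_sub_distrib]
      exact Finset.sum_congr rfl (fun p _ => splitVec_pairOf p)
    rw [hsplit, sum_single_Pk]
    exact sub_mem (Submodule.sum_mem _ (fun p _ => phi_mem _))
      (Submodule.smul_mem _ _ (phi_mem _))
  · -- basis after removing any I₀
    intro I₀ hI₀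
    set F := (Finset.powersetCard 2 (Finset.univ : Finset (Fin n))).filter
      (fun I => k ∉ I) with hFdef
    set f := (fun I : {I : Finset (Fin n) // I ∈ F ∧ I ≠ I₀} => v I.val) with hfdef
    set S := Submodule.span ℝ (Set.range f) with hSdef
    -- the class of a standard basis vector at a pair avoiding k, in terms of v
    have hps : ∀ p : Pair n,
        (phiIm n).mkQ (Pi.single p 1 : Pair n → ℝ) = (-(1/2) : ℝ) • v (pairOf p) := by
      intro p
      have h1 : v (pairOf p) = (phiIm n).mkQ (splitVec (pairOf p)) :=
        (Submodule.mkQ_apply _ _).symm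
      rw [h1, splitVec_pairOf p, map_sub, map_smul]
      have h0 : (phiIm n).mkQ (phiMap n (Pi.single p.val.1 1 + Pi.single p.val.2 1)) = 0 := by
        rw [Submodule.mkQ_apply, Submodule.Quotient.mk_eq_zero]; exact phi_mem _
      rw [h0, zero_sub, smul_neg, smul_smul]
      norm_num
    -- membership of v(pairOf p) classes for valid indices
    have hS0 : ∀ p : Pair n, p ∈ Pk n k → pairOf p ≠ I₀ →
        (phiIm n).mkQ (Pi.single p 1 : Pair n → ℝ) ∈ S := by
      intro p hp hne
      rw [hps p]
      refine Submodule.smul_mem _ _ (Submodule.subset_span ?_)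
      refine ⟨⟨pairOf p, ⟨?_, hne⟩⟩, rfl⟩
      rw [hFdef, F_eq k]
      exact Finset.mem_image_of_mem _ hp
    have hS1 : ∀ p : Pair n, p ∈ Pk n k →
        (phiIm n).mkQ (Pi.single p 1 : Pair n → ℝ) ∈ S := by
      intro p hp
      by_cases hne : pairOf p = I₀
      · -- p is the pair of I₀; use the relation over Pk
        have hsum := sum_single_Pk (n := n) k
        have hvec : (Pi.single p 1 : Pair n → ℝ)
            = phiMap n (fun i => if i = k then -(1/2) else (1/2))
              - ∑ q ∈ (Pk n k).erase p, (Pi.single q 1 : Pair n → ℝ) := by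
          rw [← hsum, ← Finset.add_sum_erase _ _ hp]
          abel
        rw [hvec, map_sub, map_sum]
        have h0 : (phiIm n).mkQ (phiMap n (fun i => if i = k then -(1/2) else (1/2))) = 0 := by
          rw [Submodule.mkQ_apply, Submodule.Quotient.mk_eq_zero]; exact phi_mem _
        rw [h0]
        refine sub_mem (zero_mem _) (Submodule.sum_mem _ (fun q hq => ?_))
        have hq' := Finset.mem_of_mem_erase hq
        have hqp : q ≠ p := Finset.ne_of_mem_erase hq
        exact hS0 q hq' (fun h => hqp (pairOf_injective (h.trans hne.symm) : q = p))
      · exact hS0 p hp hne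
    -- all standard basis classes lie in S
    have hS2 : ∀ p : Pair n, (phiIm n).mkQ (Pi.single p 1 : Pair n → ℝ) ∈ S := by
      intro p
      by_cases hpk : p ∈ Pk n k
      · exact hS1 p hpk
      · -- p contains k; write e_p via φ(δ_i) minus pairs through i
        rw [mem_Pk, not_and_or, not_not, not_not] at hpk
        have hne12 : p.val.1 ≠ p.val.2 := ne_of_lt p.prop
        set i : Fin n := if p.val.1 = k then p.val.2 else p.val.1 with hidef
        have hik : i ≠ k := by
          rcases hpk with h | h
          · rw [hidef, if_pos h, ← h]; exact fun e => hne12 e.symm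
          · have h1 : p.val.1 ≠ k := fun e => hne12 (e.trans h.symm)
            rw [hidef, if_neg h1]; exact h1
        have hip : i ∈ pairOf p := by
          rw [mem_pairOf, hidef]; split_ifs with h
          · exact Or.inr rfl
          · exact Or.inl rfl
        have hkp : k ∈ pairOf p := by
          rw [mem_pairOf]
          rcases hpk with h | h
          · exact Or.inl h.symm
          · exact Or.inr h.symm
        set T := Finset.univ.filter (fun q : Pair n => q.val.1 = i ∨ q.val.2 = i) with hTdef
        have hpT : p ∈ T := by
          rw [hTdef, Finset.mem_filter]
          refine ⟨Finset.mem_univ _, ?_⟩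
          rw [mem_pairOf] at hip
          rcases hip with h | h
          · exact Or.inl h.symm
          · exact Or.inr h.symm
        have hvec : (Pi.single p 1 : Pair n → ℝ)
            = phiMap n (Pi.single i 1)
              - ∑ q ∈ T.erase p, (Pi.single q 1 : Pair n → ℝ) := by
          rw [phi_single i, ← hTdef, ← Finset.add_sum_erase _ _ hpT]
          abel
        rw [hvec, map_sub, map_sum]
        have h0 : (phiIm n).mkQ (phiMap n (Pi.single i 1)) = 0 := by
          rw [Submodule.mkQ_apply, Submodule.Quotient.mk_eq_zero]; exact phi_mem _
        rw [h0]
        refine sub_mem (zero_mem _) (Submodule.sum_mem _ (fun q hq => ?_))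
        have hqT := Finset.mem_of_mem_erase hq
        have hqp : q ≠ p := Finset.ne_of_mem_erase hq
        have hiq : i ∈ pairOf q := by
          rw [hTdef, Finset.mem_filter] at hqT
          rw [mem_pairOf]
          rcases hqT.2 with h | h
          · exact Or.inl h.symm
          · exact Or.inr h.symm
        -- q avoids k
        have hkq : k ∉ pairOf q := by
          intro hkq
          -- then pairOf q = pairOf p, contradiction with q ≠ p
          have hsub1 : ({i, k} : Finset (Fin n)) ⊆ pairOf q := by
            intro x hx
            rcases Finset.mem_insert.mp hx with rfl | hx
            · exact hiq
            · rw [Finset.mem_singleton.mp hx]; exact hkq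
          have hsub2 : ({i, k} : Finset (Fin n)) ⊆ pairOf p := by
            intro x hx
            rcases Finset.mem_insert.mp hx with rfl | hx
            · exact hip
            · rw [Finset.mem_singleton.mp hx]; exact hkp
          have hcik : ({i, k} : Finset (Fin n)).card = 2 := by
            rw [Finset.card_insert_of_notMem (by simpa using hik), Finset.card_singleton]
          have he1 : ({i, k} : Finset (Fin n)) = pairOf q :=
            Finset.eq_of_subset_of_card_le hsub1 (by rw [card_pairOf, hcik])
          have he2 : ({i, k} : Finset (Fin n)) = pairOf p :=
            Finset.eq_of_subset_of_card_le hsub2 (by rw [card_pairOf, hcik])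
          exact hqp (pairOf_injective (he1.symm.trans he2))
        have hqPk : q ∈ Pk n k := by
          rw [mem_Pk]
          constructor
          · intro e; exact hkq (by rw [mem_pairOf]; exact Or.inl e.symm)
          · intro e; exact hkq (by rw [mem_pairOf]; exact Or.inr e.symm)
        exact hS1 q hqPk
    -- spanning
    have hspan : S = ⊤ := by
      refine le_antisymm le_top ?_
      have hbtop : Submodule.span ℝ
          (Set.range (fun p : Pair n => (Pi.single p 1 : Pair n → ℝ))) = ⊤ := by
        have := (Pi.basisFun ℝ (Pair n)).span_eq
        have hr : Set.range (Pi.basisFun ℝ (Pair n))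
            = Set.range (fun p : Pair n => (Pi.single p 1 : Pair n → ℝ)) := by
          ext x
          simp only [Set.mem_range]
          constructor
          · rintro ⟨p, rfl⟩; exact ⟨p, (Pi.basisFun_apply ℝ (Pair n) p).symm⟩
          · rintro ⟨p, rfl⟩; exact ⟨p, Pi.basisFun_apply ℝ (Pair n) p⟩
        rwa [hr] at this
      have htop2 : Submodule.span ℝ
          (Set.range (fun p : Pair n => (phiIm n).mkQ (Pi.single p 1 : Pair n → ℝ))) = ⊤ := by
        have h1 : Set.range (fun p : Pair n => (phiIm n).mkQ (Pi.single p 1 : Pair n → ℝ))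
            = (phiIm n).mkQ '' Set.range (fun p : Pair n => (Pi.single p 1 : Pair n → ℝ)) := by
          rw [← Set.range_comp]; rfl
        rw [h1, ← Submodule.map_span, hbtop, Submodule.map_top, Submodule.range_mkQ]
      rw [← htop2]
      refine Submodule.span_le.mpr ?_
      rintro x ⟨p, rfl⟩
      exact hS2 p
    constructor
    · -- linear independence via dimension count
      have hcard : Fintype.card {I : Finset (Fin n) // I ∈ F ∧ I ≠ I₀}
          = Module.finrank ℝ ((Pair n → ℝ) ⧸ phiIm n) := by
        rw [card_index hn k I₀ hI₀]
        have := finrank_quot (n := n) hn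
        omega
      exact linearIndependent_of_top_le_span_of_card_eq_finrank (hspan ▸ le_rfl) hcard
    · exact hspan

end Stmt4
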